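/- Let m ≥ 1 and i ≥ 2 be integers. Define a_t = m·∏_{l=i}^{t-1}(1 - e_l) + ∑_{l=i}^{t-1} m·c_l·∏_{h=l+1}^{t-1}(1 - e_h) for t ≥ i. Then lim_{t→∞} a_t / ( ∑_{l=i}^{t-1} ln(1 + c_l)·∏_{h=l+1}^{t-1}(1 - e_h) ) = m. -/

import Mathlib

open Filter

/-- `c_l = (2ml+1)/(l(2ml+1-2m))`. -/
noncomputable def cPAAPA (m l : ℕ) : ℝ :=
  (2 * (m : ℝ) * l + 1) / ((l : ℝ) * (2 * (m : ℝ) * l + 1 - 2 * m))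

/-- `e_l = m/(l(2ml+1-2m))`. -/
noncomputable def ePAAPA (m l : ℕ) : ℝ :=
  (m : ℝ) / ((l : ℝ) * (2 * (m : ℝ) * l + 1 - 2 * m))

section aux

variable {m l : ℕ}

lemma paapa_denom_pos (hm : 1 ≤ m) (hl : 2 ≤ l) :
    0 < (l : ℝ) * (2 * (m : ℝ) * l + 1 - 2 * m) := by
  have h1 : (1:ℝ) ≤ m := by exact_mod_cast hm
  have h2 : (2:ℝ) ≤ l := by exact_mod_cast hl
  have hml : (1:ℝ) ≤ (m:ℝ) * ((l:ℝ) - 1) := by nlinarith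
  nlinarith

lemma e_nonneg (hm : 1 ≤ m) (hl : 2 ≤ l) : 0 ≤ ePAAPA m l := by
  have h1 : (1:ℝ) ≤ m := by exact_mod_cast hm
  exact div_nonneg (by linarith) (paapa_denom_pos hm hl).le

lemma e_le_tel (hm : 1 ≤ m) (hl : 2 ≤ l) :
    ePAAPA m l ≤ 1/2 * (1/((l:ℝ) - 1) - 1/(l:ℝ)) := by
  have h1 : (1:ℝ) ≤ m := by exact_mod_cast hm
  have h2 : (2:ℝ) ≤ l := by exact_mod_cast hl
  have hd := paapa_denom_pos hm hl
  have h3 : (0:ℝ) < (l:ℝ) - 1 := by linarith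
  have h4 : (0:ℝ) < (l:ℝ) := by linarith
  have heq : 1/2 * (1/((l:ℝ) - 1) - 1/(l:ℝ)) = 1 / (2 * ((l:ℝ) - 1) * l) := by
    field_simp; ring
  have h5 : (0:ℝ) < 2 * ((l:ℝ) - 1) * l := by positivity
  rw [ePAAPA, heq, div_le_div_iff₀ hd h5]
  nlinarith

lemma e_le_quarter (hm : 1 ≤ m) (hl : 2 ≤ l) : ePAAPA m l ≤ 1/4 := by
  have h2 : (2:ℝ) ≤ l := by exact_mod_cast hl
  have := e_le_tel hm hl
  have h3 : (0:ℝ) < (l:ℝ) - 1 := by linarith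
  have h4 : (0:ℝ) < l := by linarith
  have heq : 1/((l:ℝ) - 1) - 1/(l:ℝ) = 1/(((l:ℝ)-1) * l) := by field_simp; ring
  have h5 : 1/(((l:ℝ)-1) * l) ≤ 1/2 := by
    rw [div_le_div_iff₀ (by positivity) (by norm_num)]
    nlinarith
  rw [heq] at this
  linarith

lemma one_sub_e_pos (hm : 1 ≤ m) (hl : 2 ≤ l) : 0 < 1 - ePAAPA m l := by
  have := e_le_quarter hm hl; linarith

lemma one_sub_e_le_one (hm : 1 ≤ m) (hl : 2 ≤ l) : 1 - ePAAPA m l ≤ 1 := by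
  have := e_nonneg hm hl; linarith

lemma c_pos (hm : 1 ≤ m) (hl : 2 ≤ l) : 0 < cPAAPA m l := by
  have h1 : (1:ℝ) ≤ m := by exact_mod_cast hm
  have h2 : (2:ℝ) ≤ l := by exact_mod_cast hl
  exact div_pos (by nlinarith) (paapa_denom_pos hm hl)

lemma c_ge (hm : 1 ≤ m) (hl : 2 ≤ l) : 1/(l:ℝ) ≤ cPAAPA m l := by
  have h1 : (1:ℝ) ≤ m := by exact_mod_cast hm
  have h2 : (2:ℝ) ≤ l := by exact_mod_cast hl
  have hd := paapa_denom_pos hm hl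
  have h4 : (0:ℝ) < (l:ℝ) := by linarith
  rw [cPAAPA, div_le_div_iff₀ h4 hd]
  nlinarith

lemma c_le (hm : 1 ≤ m) (hl : 2 ≤ l) : cPAAPA m l ≤ 3/(l:ℝ) := by
  have h1 : (1:ℝ) ≤ m := by exact_mod_cast hm
  have h2 : (2:ℝ) ≤ l := by exact_mod_cast hl
  have hd := paapa_denom_pos hm hl
  have h4 : (0:ℝ) < (l:ℝ) := by linarith
  rw [cPAAPA, div_le_div_iff₀ hd h4]
  nlinarith

lemma c_sq_le (hm : 1 ≤ m) (hl : 2 ≤ l) :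
    (cPAAPA m l)^2 ≤ 9 * (1/((l:ℝ) - 1) - 1/(l:ℝ)) := by
  have h2 : (2:ℝ) ≤ l := by exact_mod_cast hl
  have h3 : (0:ℝ) < (l:ℝ) - 1 := by linarith
  have h4 : (0:ℝ) < (l:ℝ) := by linarith
  have hc := c_le hm hl
  have hc0 := (c_pos hm hl).le
  have h5 : (cPAAPA m l)^2 ≤ (3/(l:ℝ))^2 := by
    apply pow_le_pow_left₀ hc0 hc
  have h6 : (3/(l:ℝ))^2 ≤ 9 * (1/((l:ℝ) - 1) - 1/(l:ℝ)) := by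
    have heq : 1/((l:ℝ) - 1) - 1/(l:ℝ) = 1/(((l:ℝ)-1) * l) := by field_simp; ring
    rw [heq, div_pow, mul_one_div, div_le_div_iff₀ (by positivity) (by positivity)]
    nlinarith
  linarith

/-- `c - log(1+c) ≤ c²` for `c ≥ 0`. -/
lemma sub_log_le_sq {c : ℝ} (hc : 0 ≤ c) : c - Real.log (1 + c) ≤ c^2 := by
  have h1 : (0:ℝ) < 1 + c := by linarith
  have h2 : Real.log (1/(1+c)) ≤ 1/(1+c) - 1 :=
    Real.log_le_sub_one_of_pos (by positivity)
  rw [Real.log_div one_ne_zero h1.ne', Real.log_one] at h2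
  have h3 : 1 - 1/(1+c) ≤ Real.log (1 + c) := by linarith
  have h4 : c - c^2 ≤ 1 - 1/(1+c) := by
    rw [← sub_nonneg]
    have : 1 - 1/(1+c) - (c - c^2) = c^3 / (1+c) := by field_simp; ring
    rw [this]; positivity
  linarith

lemma log_one_add_c_pos (hm : 1 ≤ m) (hl : 2 ≤ l) : 0 < Real.log (1 + cPAAPA m l) := by
  have := c_pos hm hl
  apply Real.log_pos; linarith

lemma log_one_add_c_ge (hm : 1 ≤ m) (hl : 2 ≤ l) :
    Real.log ((l:ℝ) + 1) - Real.log (l:ℝ) ≤ Real.log (1 + cPAAPA m l) := by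
  have h2 : (2:ℝ) ≤ l := by exact_mod_cast hl
  have h4 : (0:ℝ) < (l:ℝ) := by linarith
  have hc := c_ge hm hl
  have : Real.log ((l:ℝ) + 1) - Real.log (l:ℝ) = Real.log (1 + 1/(l:ℝ)) := by
    rw [← Real.log_div (by positivity) h4.ne']
    congr 1; field_simp
  rw [this]
  apply Real.log_le_log (by positivity)
  linarith

/-- product of `1 - x` over a finset is at least `1 - sum`, when `0 ≤ x ≤ 1`. -/
lemma prod_one_sub_ge {s : Finset ℕ} {x : ℕ → ℝ}
    (h0 : ∀ h ∈ s, 0 ≤ x h) (h1 : ∀ h ∈ s, x h ≤ 1) :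
    1 - ∑ h ∈ s, x h ≤ ∏ h ∈ s, (1 - x h) := by
  classical
  induction s using Finset.induction_on with
  | empty => simp
  | @insert a s ha ih =>
      rw [Finset.prod_insert ha, Finset.sum_insert ha]
      have hxa0 := h0 a (Finset.mem_insert_self a s)
      have hxa1 := h1 a (Finset.mem_insert_self a s)
      have ih' := ih (fun h hh => h0 h (Finset.mem_insert_of_mem hh))
        (fun h hh => h1 h (Finset.mem_insert_of_mem hh))
      have hs0 : 0 ≤ ∑ h ∈ s, x h :=
        Finset.sum_nonneg (fun h hh => h0 h (Finset.mem_insert_of_mem hh))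
      nlinarith

/-- telescoping sum bound: `∑_{h∈Ico a t} (1/(h-1) - 1/h) ≤ 1/(a-1)` for `2 ≤ a`. -/
lemma tel_sum_le {a t : ℕ} (ha : 2 ≤ a) :
    ∑ h ∈ Finset.Ico a t, (1/((h:ℝ) - 1) - 1/(h:ℝ)) ≤ 1/((a:ℝ) - 1) := by
  have ha' : (2:ℝ) ≤ a := by exact_mod_cast ha
  rcases le_or_gt a t with hat | hat
  · have ht' : (2:ℝ) ≤ t := le_trans ha' (by exact_mod_cast hat)
    set f : ℕ → ℝ := fun h => -(1/((h:ℝ) - 1)) with hf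
    have key : ∑ h ∈ Finset.Ico a t, (f (h+1) - f h) = f t - f a := by
      rw [Finset.sum_Ico_eq_sub _ hat, Finset.sum_range_sub, Finset.sum_range_sub]
      ring
    have heq : ∑ h ∈ Finset.Ico a t, (1/((h:ℝ) - 1) - 1/(h:ℝ)) =
        ∑ h ∈ Finset.Ico a t, (f (h+1) - f h) := by
      apply Finset.sum_congr rfl
      intro h hh
      have hh2 : 2 ≤ h := le_trans ha (Finset.mem_Ico.mp hh).1
      have hh2' : (2:ℝ) ≤ h := by exact_mod_cast hh2
      simp only [hf]
      push_cast
      have h1 : (h:ℝ) - 1 ≠ 0 := by linarith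
      have h2 : (h:ℝ) ≠ 0 := by linarith
      rw [show (h:ℝ) + 1 - 1 = h by ring]
      field_simp
      ring
    rw [heq, key]
    simp only [hf]
    have h3 : 0 ≤ 1/((t:ℝ)-1) := by
      apply div_nonneg zero_le_one; linarith
    linarith
  · rw [Finset.Ico_eq_empty (by omega)]
    simp only [Finset.sum_empty]
    apply div_nonneg zero_le_one; linarith

/-- sum of `e` over `Ico a t` (with `a ≥ 2`) is at most `1/2`. -/
lemma sum_e_le {m a t : ℕ} (hm : 1 ≤ m) (ha : 2 ≤ a) :
    ∑ h ∈ Finset.Ico a t, ePAAPA m h ≤ 1/2 := by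
  have h1 : ∑ h ∈ Finset.Ico a t, ePAAPA m h ≤
      ∑ h ∈ Finset.Ico a t, 1/2 * (1/((h:ℝ) - 1) - 1/(h:ℝ)) := by
    apply Finset.sum_le_sum
    intro h hh
    exact e_le_tel hm (le_trans ha (Finset.mem_Ico.mp hh).1)
  rw [← Finset.mul_sum] at h1
  have h2 := tel_sum_le (t := t) ha
  have ha' : (2:ℝ) ≤ a := by exact_mod_cast ha
  have h3 : 1/((a:ℝ) - 1) ≤ 1 := by
    rw [div_le_one (by linarith)]; linarith
  nlinarith

/-- the product over `Ico a t` of `1 - e` is in `[1/2, 1]`. -/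
lemma prod_one_sub_e_ge {m a t : ℕ} (hm : 1 ≤ m) (ha : 2 ≤ a) :
    1/2 ≤ ∏ h ∈ Finset.Ico a t, (1 - ePAAPA m h) := by
  have h1 := prod_one_sub_ge (s := Finset.Ico a t) (x := fun h => ePAAPA m h)
    (fun h hh => e_nonneg hm (le_trans ha (Finset.mem_Ico.mp hh).1))
    (fun h hh => le_trans (e_le_quarter hm (le_trans ha (Finset.mem_Ico.mp hh).1)) (by norm_num))
  have h2 := sum_e_le (t := t) hm ha
  linarith

lemma prod_one_sub_e_le_one {m a t : ℕ} (hm : 1 ≤ m) (ha : 2 ≤ a) :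
    ∏ h ∈ Finset.Ico a t, (1 - ePAAPA m h) ≤ 1 := by
  apply Finset.prod_le_one
  · intro h hh
    exact (one_sub_e_pos hm (le_trans ha (Finset.mem_Ico.mp hh).1)).le
  · intro h hh
    exact one_sub_e_le_one hm (le_trans ha (Finset.mem_Ico.mp hh).1)

end aux

noncomputable def qPAAPA (m l t : ℕ) : ℝ := ∏ h ∈ Finset.Ico (l+1) t, (1 - ePAAPA m h)

noncomputable def sPAAPA (m i t : ℕ) : ℝ := ∑ l ∈ Finset.Ico i t, cPAAPA m l * qPAAPA m l t

noncomputable def dPAAPA (m i t : ℕ) : ℝ :=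
  ∑ l ∈ Finset.Ico i t, Real.log (1 + cPAAPA m l) * qPAAPA m l t

section main

variable {m i t : ℕ}

lemma q_bounds (hm : 1 ≤ m) (hi : 2 ≤ i) {l : ℕ} (hl : i ≤ l) :
    1/2 ≤ qPAAPA m l t ∧ qPAAPA m l t ≤ 1 :=
  ⟨prod_one_sub_e_ge hm (by omega), prod_one_sub_e_le_one hm (by omega)⟩

lemma d_ge (hm : 1 ≤ m) (hi : 2 ≤ i) (hit : i ≤ t) :
    1/2 * (Real.log t - Real.log i) ≤ dPAAPA m i t := by
  have tel : ∑ l ∈ Finset.Ico i t,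
      ((fun n : ℕ => Real.log n) (l+1) - (fun n : ℕ => Real.log n) l)
      = Real.log t - Real.log i := by
    rw [Finset.sum_Ico_eq_sub _ hit]
    simp only [Finset.sum_range_sub (fun n : ℕ => Real.log (n:ℝ))]
    ring
  calc 1/2 * (Real.log t - Real.log i)
      = ∑ l ∈ Finset.Ico i t, 1/2 *
        ((fun n : ℕ => Real.log n) (l+1) - (fun n : ℕ => Real.log n) l) := by
        rw [← Finset.mul_sum, tel]
    _ ≤ dPAAPA m i t := by
        apply Finset.sum_le_sum
        intro l hl
        have hl2 : 2 ≤ l := le_trans hi (Finset.mem_Ico.mp hl).1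
        have hl2' : (2:ℝ) ≤ l := by exact_mod_cast hl2
        have hc := log_one_add_c_ge hm hl2
        have hq := q_bounds (t := t) hm hi (Finset.mem_Ico.mp hl).1
        have hlog0 : 0 ≤ Real.log ((l:ℝ)+1) - Real.log l := by
          have := Real.log_le_log (by linarith : (0:ℝ) < l) (by linarith : (l:ℝ) ≤ l+1)
          linarith
        have hcast : ((l+1:ℕ):ℝ) = (l:ℝ) + 1 := by push_cast; ring
        simp only [hcast]
        nlinarith [hq.1, hq.2, hc, hlog0,
          mul_nonneg hlog0 (by linarith [hq.1] : (0:ℝ) ≤ qPAAPA m l t - 1/2),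
          mul_nonneg (sub_nonneg.mpr hc) (by linarith [hq.1] : (0:ℝ) ≤ qPAAPA m l t)]

lemma d_tendsto (hm : 1 ≤ m) (hi : 2 ≤ i) :
    Tendsto (fun t => dPAAPA m i t) atTop atTop := by
  have h1 : Tendsto (fun t : ℕ => Real.log t) atTop atTop :=
    Real.tendsto_log_atTop.comp tendsto_natCast_atTop_atTop
  have h2 : Tendsto (fun t : ℕ => Real.log t + (- Real.log i)) atTop atTop :=
    tendsto_atTop_add_const_right atTop _ h1
  have h3 : Tendsto (fun t : ℕ => 1/2 * (Real.log t - Real.log i)) atTop atTop := by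
    apply Tendsto.const_mul_atTop (by norm_num : (0:ℝ) < 1/2)
    simpa [sub_eq_add_neg] using h2
  apply tendsto_atTop_mono' atTop _ h3
  filter_upwards [eventually_ge_atTop i] with t ht
  exact d_ge hm hi ht

lemma sd_bounds (hm : 1 ≤ m) (hi : 2 ≤ i) :
    0 ≤ sPAAPA m i t - dPAAPA m i t ∧ sPAAPA m i t - dPAAPA m i t ≤ 9 := by
  have hi' : (2:ℝ) ≤ i := by exact_mod_cast hi
  have hdiff : sPAAPA m i t - dPAAPA m i t =
      ∑ l ∈ Finset.Ico i t, (cPAAPA m l - Real.log (1 + cPAAPA m l)) * qPAAPA m l t := by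
    rw [sPAAPA, dPAAPA, ← Finset.sum_sub_distrib]
    apply Finset.sum_congr rfl
    intro l _; ring
  have hterm : ∀ l ∈ Finset.Ico i t,
      0 ≤ (cPAAPA m l - Real.log (1 + cPAAPA m l)) * qPAAPA m l t ∧
      (cPAAPA m l - Real.log (1 + cPAAPA m l)) * qPAAPA m l t
        ≤ 9 * (1/((l:ℝ) - 1) - 1/(l:ℝ)) := by
    intro l hl
    have hl2 : 2 ≤ l := le_trans hi (Finset.mem_Ico.mp hl).1
    have hc0 := (c_pos hm hl2).le
    have hq := q_bounds (t := t) hm hi (Finset.mem_Ico.mp hl).1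
    have hub : Real.log (1 + cPAAPA m l) ≤ cPAAPA m l := by
      have := Real.log_le_sub_one_of_pos (by linarith : (0:ℝ) < 1 + cPAAPA m l)
      linarith
    have hsq := sub_log_le_sq hc0
    have hc2 := c_sq_le hm hl2
    constructor
    · exact mul_nonneg (by linarith) (by linarith [hq.1])
    · calc (cPAAPA m l - Real.log (1 + cPAAPA m l)) * qPAAPA m l t
          ≤ (cPAAPA m l - Real.log (1 + cPAAPA m l)) * 1 :=
            mul_le_mul_of_nonneg_left hq.2 (by linarith)
        _ = cPAAPA m l - Real.log (1 + cPAAPA m l) := mul_one _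
        _ ≤ (cPAAPA m l)^2 := hsq
        _ ≤ 9 * (1/((l:ℝ) - 1) - 1/(l:ℝ)) := hc2
  constructor
  · rw [hdiff]
    exact Finset.sum_nonneg (fun l hl => (hterm l hl).1)
  · rw [hdiff]
    calc ∑ l ∈ Finset.Ico i t, (cPAAPA m l - Real.log (1 + cPAAPA m l)) * qPAAPA m l t
        ≤ ∑ l ∈ Finset.Ico i t, 9 * (1/((l:ℝ) - 1) - 1/(l:ℝ)) :=
          Finset.sum_le_sum (fun l hl => (hterm l hl).2)
      _ = 9 * ∑ l ∈ Finset.Ico i t, (1/((l:ℝ) - 1) - 1/(l:ℝ)) := by rw [Finset.mul_sum]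
      _ ≤ 9 * (1/((i:ℝ) - 1)) := by
          have := tel_sum_le (t := t) hi
          linarith
      _ ≤ 9 := by
          have : 1/((i:ℝ) - 1) ≤ 1 := by
            rw [div_le_one (by linarith)]; linarith
          linarith

lemma p_bounds (hm : 1 ≤ m) (hi : 2 ≤ i) :
    0 ≤ ∏ l ∈ Finset.Ico i t, (1 - ePAAPA m l) ∧
    ∏ l ∈ Finset.Ico i t, (1 - ePAAPA m l) ≤ 1 := by
  constructor
  · apply Finset.prod_nonneg
    intro l hl
    exact (one_sub_e_pos hm (le_trans hi (Finset.mem_Ico.mp hl).1)).le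
  · exact prod_one_sub_e_le_one hm hi

end main

/-- Theorem 3.6 of the paper: in the pure anti-preferential attachment model (`p = 1`)
the expected degree `a_t = m ∏_{l=i}^{t-1}(1-e_l) + ∑_{l=i}^{t-1} m c_l ∏_{h=l+1}^{t-1}(1-e_h)`
satisfies `a_t / (∑_{l=i}^{t-1} ln(1+c_l) ∏_{h=l+1}^{t-1}(1-e_h)) → m`. -/
theorem pa_apa_pure_anti_expected_degree_asymptotics (m i : ℕ) (hm : 1 ≤ m) (hi : 2 ≤ i) :
    Tendsto (fun t : ℕ =>
      ((m : ℝ) * (∏ l ∈ Finset.Ico i t, (1 - ePAAPA m l))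
        + ∑ l ∈ Finset.Ico i t, (m : ℝ) * cPAAPA m l *
            ∏ h ∈ Finset.Ico (l + 1) t, (1 - ePAAPA m h))
      / (∑ l ∈ Finset.Ico i t, Real.log (1 + cPAAPA m l) *
            ∏ h ∈ Finset.Ico (l + 1) t, (1 - ePAAPA m h)))
      atTop (nhds (m : ℝ)) := by
  have hm' : (1:ℝ) ≤ m := by exact_mod_cast hm
  have hi' : (2:ℝ) ≤ i := by exact_mod_cast hi
  set P : ℕ → ℝ := fun t => ∏ l ∈ Finset.Ico i t, (1 - ePAAPA m l) with hPdef
  -- rewrite the goal function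
  have hfun : ∀ t : ℕ,
      ((m : ℝ) * P t
        + ∑ l ∈ Finset.Ico i t, (m : ℝ) * cPAAPA m l *
            ∏ h ∈ Finset.Ico (l + 1) t, (1 - ePAAPA m h))
      / (∑ l ∈ Finset.Ico i t, Real.log (1 + cPAAPA m l) *
            ∏ h ∈ Finset.Ico (l + 1) t, (1 - ePAAPA m h))
      = ((m : ℝ) * P t + (m : ℝ) * sPAAPA m i t) / dPAAPA m i t := by
    intro t
    simp only [sPAAPA, dPAAPA, qPAAPA, Finset.mul_sum, mul_assoc]
  refine Tendsto.congr (fun t => (hfun t).symm) ?_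
  -- the remainder term
  set r : ℕ → ℝ := fun t =>
    (m : ℝ) * (P t + (sPAAPA m i t - dPAAPA m i t)) / dPAAPA m i t with hrdef
  have hDpos : ∀ᶠ t in atTop, 0 < dPAAPA m i t := by
    filter_upwards [eventually_ge_atTop (i+1)] with t ht
    have h1 := d_ge (t := t) hm hi (by omega)
    have h2 : Real.log (i:ℝ) < Real.log (t:ℝ) := by
      apply Real.log_lt_log (by linarith)
      exact_mod_cast (by omega : i < t)
    linarith
  have hr0 : Tendsto r atTop (nhds 0) := by
    apply squeeze_zero' (g := fun t => 10 * (m:ℝ) / dPAAPA m i t)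
    · filter_upwards [hDpos] with t ht
      have hsd := sd_bounds (m := m) (i := i) (t := t) hm hi
      have hp := p_bounds (m := m) (i := i) (t := t) hm hi
      rw [hrdef]
      apply div_nonneg _ ht.le
      have : (0:ℝ) ≤ P t := hp.1
      nlinarith [hsd.1]
    · filter_upwards [hDpos] with t ht
      have hsd := sd_bounds (m := m) (i := i) (t := t) hm hi
      have hp := p_bounds (m := m) (i := i) (t := t) hm hi
      rw [hrdef]
      have hnum : (m:ℝ) * (P t + (sPAAPA m i t - dPAAPA m i t)) ≤ 10 * (m:ℝ) := by
        nlinarith [hp.2, hsd.2, hsd.1, hp.1]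
      exact (div_le_div_iff_of_pos_right ht).mpr hnum
    · exact Tendsto.div_atTop tendsto_const_nhds (d_tendsto hm hi)
  have heq : ∀ᶠ t in atTop,
      ((m : ℝ) * P t + (m : ℝ) * sPAAPA m i t) / dPAAPA m i t = (m : ℝ) + r t := by
    filter_upwards [hDpos] with t ht
    rw [hrdef]
    field_simp
    ring
  have : Tendsto (fun t => (m : ℝ) + r t) atTop (nhds ((m:ℝ) + 0)) :=
    tendsto_const_nhds.add hr0
  rw [add_zero] at this
  exact Tendsto.congr' (heq.mono fun t h => h.symm) this
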